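/- arXiv:1905.10352 — 2 statements merged into one kernel-verified Lean document; each statement's English description precedes it below -/
import Mathlib

section
/- For every integer n ≥ 1, the sum of all genus one ψ-intersection numbers ∫_{M̄_{1,n}} 1/∏_{i=1}^n (1−ψ_i) equals (1/24)·( n^n − ∑_{k=1}^{n−1} n^{n−k}·(n−1)!/( k(k+1)·(n−k−1)! ) ). -/
open Finset

/-- The closed formula for genus one `ψ`-class intersection numbers:
`(1/24)·( multinomial(n; a) − ∑_{b ∈ {0,1}^n} multinomial(n − |b|; a − b)·(|b| − 2)! )`,
where summands involving negative factorials or negative multinomial arguments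
(i.e. `|b| ≤ 1`, or `bᵢ = 1` with `aᵢ = 0`) are excluded. -/
def genusOnePsiClosedForm (n : ℕ) (a : Fin n → ℕ) : ℚ :=
  (1 / 24 : ℚ) *
    ((Nat.multinomial Finset.univ a : ℚ) -
      ∑ b ∈ (Finset.univ : Finset (Fin n)).powerset.filter
          (fun b : Finset (Fin n) => 2 ≤ b.card ∧ ∀ i ∈ b, 1 ≤ a i),
        (Nat.multinomial Finset.univ (fun i => a i - if i ∈ b then 1 else 0) : ℚ) *
          (Nat.factorial (b.card - 2) : ℚ))

/-- Sum of multinomial coefficients: `∑_{|a|=m} multinomial(a) = n^m`. -/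
lemma sum_multinomial_eq (n m : ℕ) :
    ∑ a ∈ Finset.Nat.antidiagonalTuple n m, (Nat.multinomial Finset.univ a : ℚ) =
      (n : ℚ) ^ m := by
  have h := Finset.sum_pow_eq_sum_piAntidiag (Finset.univ : Finset (Fin n))
    (fun _ => (1 : ℚ)) m
  rw [Finset.piAntidiag_univ_fin_eq_antidiagonalTuple _ n] at h
  simpa using h.symm

/-- For a fixed subset `b`, summing the shifted multinomials over all `a` with
`|a| = n` and `a ≥ 1` on `b` gives `n^(n - |b|)`. -/
lemma sum_shifted_multinomial (n : ℕ) (b : Finset (Fin n)) :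
    ∑ a ∈ (Finset.Nat.antidiagonalTuple n n).filter (fun a => ∀ i ∈ b, 1 ≤ a i),
      (Nat.multinomial Finset.univ (fun i => a i - if i ∈ b then 1 else 0) : ℚ) =
      (n : ℚ) ^ (n - b.card) := by
  have hbn : b.card ≤ n := by
    simpa using Finset.card_le_card (Finset.subset_univ b)
  rw [← sum_multinomial_eq n (n - b.card)]
  refine Finset.sum_nbij' (fun a => fun i => a i - if i ∈ b then 1 else 0)
    (fun a => fun i => a i + if i ∈ b then 1 else 0) ?_ ?_ ?_ ?_ ?_
  · intro a ha
    rw [Finset.mem_filter, Finset.Nat.mem_antidiagonalTuple] at ha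
    rw [Finset.Nat.mem_antidiagonalTuple]
    have hle : ∀ i ∈ (Finset.univ : Finset (Fin n)),
        (if i ∈ b then 1 else 0) ≤ a i := by
      intro i _
      split_ifs with hi
      · exact ha.2 i hi
      · exact Nat.zero_le _
    rw [Finset.sum_tsub_distrib _ hle, ha.1]
    congr 1
    rw [Finset.sum_ite_mem, Finset.univ_inter, Finset.sum_const, smul_eq_mul, mul_one]
  · intro a ha
    rw [Finset.Nat.mem_antidiagonalTuple] at ha
    rw [Finset.mem_filter, Finset.Nat.mem_antidiagonalTuple]
    constructor
    · rw [Finset.sum_add_distrib, ha,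
        Finset.sum_ite_mem, Finset.univ_inter, Finset.sum_const, smul_eq_mul, mul_one]
      omega
    · intro i hi; simp [hi]
  · intro a ha
    rw [Finset.mem_filter] at ha
    funext i
    by_cases hi : i ∈ b
    · have := ha.2 i hi
      simp only [if_pos hi]
      omega
    · simp [hi]
  · intro a _
    funext i
    by_cases hi : i ∈ b <;> simp [hi]
  · intro a _
    rfl

lemma sum_powerset_card_fun (n : ℕ) (h : ℕ → ℚ) :
    ∑ b ∈ (Finset.univ : Finset (Fin n)).powerset, h b.card =
      ∑ k ∈ Finset.range (n + 1), (n.choose k : ℚ) * h k := by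
  rw [Finset.powerset_card_disjiUnion]; erw [Finset.sum_disjiUnion]
  simp only [Finset.card_univ, Fintype.card_fin]
  refine Finset.sum_congr rfl fun k _ => ?_
  rw [Finset.sum_congr rfl (fun b hb => by
    rw [(Finset.mem_powersetCard.mp hb).2]), Finset.sum_const,
    Finset.card_powersetCard, Finset.card_univ, Fintype.card_fin, nsmul_eq_mul]

/-- The sum of all genus one `ψ`-intersection numbers
`∫_{M̄_{1,n}} 1/∏(1−ψᵢ) = ∑_{|a|=n} ∫ ψ^a` equals
`(1/24)·( n^n − ∑_{k=1}^{n−1} n^{n−k}·(n−1)!/( k(k+1)·(n−k−1)! ) )`,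
where each summand `∫ ψ^a` is given by the closed multinomial formula. -/
theorem genusOne_psi_intersections_total (n : ℕ) (hn : 1 ≤ n) :
    ∑ a ∈ Finset.Nat.antidiagonalTuple n n, genusOnePsiClosedForm n a =
      (1 / 24 : ℚ) * ((n : ℚ) ^ n -
        ∑ k ∈ Finset.Icc 1 (n - 1), (n : ℚ) ^ (n - k) * (Nat.factorial (n - 1) : ℚ) /
          (((k : ℚ) * ((k : ℚ) + 1)) * (Nat.factorial (n - k - 1) : ℚ))) := by
  unfold genusOnePsiClosedForm
  rw [← Finset.mul_sum, Finset.sum_sub_distrib, sum_multinomial_eq]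
  congr 2
  -- swap the order of summation
  have hswap :
      ∑ a ∈ Finset.Nat.antidiagonalTuple n n,
        ∑ b ∈ (Finset.univ : Finset (Fin n)).powerset.filter
            (fun b : Finset (Fin n) => 2 ≤ b.card ∧ ∀ i ∈ b, 1 ≤ a i),
          (Nat.multinomial Finset.univ (fun i => a i - if i ∈ b then 1 else 0) : ℚ) *
            (Nat.factorial (b.card - 2) : ℚ) =
      ∑ b ∈ (Finset.univ : Finset (Fin n)).powerset.filter
          (fun b : Finset (Fin n) => 2 ≤ b.card),
        (∑ a ∈ (Finset.Nat.antidiagonalTuple n n).filter (fun a => ∀ i ∈ b, 1 ≤ a i),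
          (Nat.multinomial Finset.univ (fun i => a i - if i ∈ b then 1 else 0) : ℚ)) *
            (Nat.factorial (b.card - 2) : ℚ) := by
    simp only [Finset.sum_filter]
    rw [Finset.sum_comm]
    refine Finset.sum_congr rfl fun b _ => ?_
    by_cases hP : 2 ≤ b.card
    · rw [if_pos hP, Finset.sum_mul]
      refine Finset.sum_congr rfl fun a _ => ?_
      by_cases hQ : ∀ i ∈ b, 1 ≤ a i <;> simp [hP, hQ]
    · rw [if_neg hP]
      refine Finset.sum_eq_zero fun a _ => ?_
      simp [hP]
  rw [hswap]
  have hstep : ∀ b ∈ (Finset.univ : Finset (Fin n)).powerset.filter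
      (fun b : Finset (Fin n) => 2 ≤ b.card),
      (∑ a ∈ (Finset.Nat.antidiagonalTuple n n).filter (fun a => ∀ i ∈ b, 1 ≤ a i),
        (Nat.multinomial Finset.univ (fun i => a i - if i ∈ b then 1 else 0) : ℚ)) *
          (Nat.factorial (b.card - 2) : ℚ) =
      (n : ℚ) ^ (n - b.card) * (Nat.factorial (b.card - 2) : ℚ) := by
    intro b _
    rw [sum_shifted_multinomial]
  rw [Finset.sum_congr rfl hstep]
  rw [Finset.sum_filter, sum_powerset_card_fun n
    (fun k => if 2 ≤ k then (n : ℚ) ^ (n - k) * (Nat.factorial (k - 2) : ℚ) else 0)]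
  have hIcc : Finset.range (n + 1) = Finset.Icc 0 n := by
    rw [Finset.range_eq_Ico, Finset.Ico_add_one_right_eq_Icc]
  rw [hIcc]
  have hfil2 : ∑ k ∈ Finset.Icc 0 n, (n.choose k : ℚ) *
      (if 2 ≤ k then (n : ℚ) ^ (n - k) * (Nat.factorial (k - 2) : ℚ) else 0) =
      ∑ k ∈ Finset.Icc 2 n, (n.choose k : ℚ) *
        ((n : ℚ) ^ (n - k) * (Nat.factorial (k - 2) : ℚ)) := by
    rw [show Finset.Icc 2 n = (Finset.Icc 0 n).filter (fun k => 2 ≤ k) by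
      ext k; simp only [Finset.mem_Icc, Finset.mem_filter]; omega,
      Finset.sum_filter]
    refine Finset.sum_congr rfl fun k _ => ?_
    by_cases hk : 2 ≤ k <;> simp [hk]
  rw [hfil2]
  refine Finset.sum_nbij' (fun j => j - 1) (fun k => k + 1) ?_ ?_ ?_ ?_ ?_
  · intro j hj; simp only [Finset.mem_Icc] at *; omega
  · intro k hk; simp only [Finset.mem_Icc] at *; omega
  · intro j hj; simp only [Finset.mem_Icc] at hj; show j - 1 + 1 = j; omega
  · intro k hk; simp only [Finset.mem_Icc] at hk; show k + 1 - 1 = k; omega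
  · intro j hj
    simp only [Finset.mem_Icc] at hj
    obtain ⟨h2, hjn⟩ := hj
    beta_reduce
    have e1 : n - (j - 1) = (n - j) + 1 := by omega
    have e2 : n - (j - 1) - 1 = n - j := by omega
    have ec : ((j - 1 : ℕ) : ℚ) = (j : ℚ) - 1 := by
      push_cast [Nat.cast_sub (show 1 ≤ j by omega)]; ring
    rw [e2, e1, ec]
    have key : n.choose j * (Nat.factorial (j - 2) * ((j - 1) * j) * Nat.factorial (n - j))
        = n * Nat.factorial (n - 1) := by
      obtain ⟨m, rfl⟩ : ∃ m, j = m + 2 := ⟨j - 2, by omega⟩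
      have h1 : Nat.factorial (m + 2 - 2) * ((m + 2 - 1) * (m + 2)) =
          Nat.factorial (m + 2) := by
        simp [Nat.factorial_succ]; ring
      rw [h1, ← mul_assoc, Nat.choose_mul_factorial_mul_factorial hjn,
        ← Nat.mul_factorial_pred (show n ≠ 0 by omega)]
    have keyQ : ((n.choose j : ℕ) : ℚ) *
        ((Nat.factorial (j - 2) : ℚ) * (((j : ℚ) - 1) * (j : ℚ)) *
          (Nat.factorial (n - j) : ℚ)) = (n : ℚ) * (Nat.factorial (n - 1) : ℚ) := by
      have := congrArg (fun x : ℕ => (x : ℚ)) key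
      push_cast [Nat.cast_sub (show 1 ≤ j by omega)] at this
      linarith [this]
    have hden : (((j : ℚ) - 1) * (((j : ℚ) - 1) + 1)) * (Nat.factorial (n - j) : ℚ) ≠ 0 := by
      have hj1 : (2 : ℚ) ≤ (j : ℚ) := by exact_mod_cast h2
      have : (Nat.factorial (n - j) : ℚ) ≠ 0 := by
        exact_mod_cast (Nat.factorial_pos (n - j)).ne'
      intro hc
      rcases mul_eq_zero.mp hc with hc | hc
      · rcases mul_eq_zero.mp hc with hc | hc <;> nlinarith
      · exact this hc
    rw [eq_div_iff hden, pow_succ]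
    linear_combination (n : ℚ) ^ (n - j) * keyQ
end

section
/- The Masur–Veech polynomial V Ω^{MV}_{0,4}(L₁,L₂,L₃,L₄) = (1/2)(π² + L₁² + L₂² + L₃² + L₄²); in particular MV_{0,4} = 2π², where MV_{0,4} = (2^{4·0−2+4}·(4·0−4+4)!/(6·0−7+2·4)!)·V Ω^{MV}_{0,4}(0,0,0,0). -/
open MeasureTheory Real

noncomputable section

lemma myIntegrableOn (r : ℝ) (hr : 0 < r) :
    IntegrableOn (fun t : ℝ => t * Real.exp (-(r * t))) (Set.Ioi 0) := by
  have h := Real.GammaIntegral_convergent (by norm_num : (0:ℝ) < 2)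
  rw [← mul_zero r, ← integrableOn_Ioi_comp_mul_left_iff _ _ hr] at h
  refine IntegrableOn.congr_fun (h.const_mul (1/r)) (fun t ht => ?_) measurableSet_Ioi
  have : ((2:ℝ) - 1) = 1 := by norm_num
  rw [this, rpow_one]
  field_simp

lemma myIntegral (r : ℝ) (hr : 0 < r) :
    ∫ t in Set.Ioi (0:ℝ), t * Real.exp (-(r * t)) = 1 / r ^ 2 := by
  have h := integral_rpow_mul_exp_neg_mul_Ioi (by norm_num : (0:ℝ) < 2) hr
  have h2 : ((2:ℝ) - 1) = 1 := by norm_num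
  rw [h2] at h
  simp_rw [rpow_one] at h
  rw [h, Real.Gamma_two, mul_one]
  rw [show ((2:ℝ)) = ((2:ℕ):ℝ) by norm_num, rpow_natCast]
  rw [div_pow, one_pow]

lemma myHasSum {l : ℝ} (hl : 0 < l) :
    HasSum (fun n : ℕ => l * Real.exp (-(((n : ℝ) + 1) * l))) (l / (Real.exp l - 1)) := by
  set r := Real.exp (-l) with hr
  have hr1 : r < 1 := by
    rw [hr, Real.exp_lt_one_iff]; linarith
  have hr0 : 0 < r := Real.exp_pos _
  have hg : HasSum (fun n : ℕ => r ^ n) (1 - r)⁻¹ := hasSum_geometric_of_lt_one hr0.le hr1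
  have h := hg.mul_left (l * r)
  have he : Real.exp l - 1 > 0 := by
    have := Real.exp_lt_exp.mpr hl
    simp only [Real.exp_zero] at this; linarith
  have hfun : (fun n : ℕ => l * Real.exp (-(((n : ℝ) + 1) * l))) = fun n => l * r * r ^ n := by
    funext n
    rw [show (-(((n:ℝ)+1) * l)) = (↑(n+1) : ℝ) * (-l) by push_cast; ring,
      Real.exp_nat_mul, ← hr, pow_succ]
    ring
  have hval : l / (Real.exp l - 1) = l * r * (1 - r)⁻¹ := by
    have hexp : Real.exp l * r = 1 := by rw [hr, ← Real.exp_add]; simp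
    rw [eq_comm, mul_inv_eq_iff_eq_mul₀ (by nlinarith : (1:ℝ) - r ≠ 0),
      div_mul_eq_mul_div, eq_div_iff he.ne']
    nlinarith [hexp]
  rw [hfun, hval]; exact h

lemma key_integral :
    ∫ ℓ in Set.Ioi (0:ℝ), ℓ / (Real.exp ℓ - 1) = π ^ 2 / 6 := by
  have hs : HasSum (fun n : ℕ => (1:ℝ) / ((n:ℝ) + 1) ^ 2) (π ^ 2 / 6) := by
    have := (hasSum_nat_add_iff (f := fun n : ℕ => (1:ℝ) / (n:ℝ) ^ 2) 1).mpr
      (by simpa using hasSum_zeta_two)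
    simpa using this
  have heq : ∫ ℓ in Set.Ioi (0:ℝ), ℓ / (Real.exp ℓ - 1)
      = ∫ ℓ in Set.Ioi (0:ℝ), ∑' n : ℕ, ℓ * Real.exp (-(((n:ℝ) + 1) * ℓ)) := by
    refine setIntegral_congr_fun measurableSet_Ioi (fun ℓ hℓ => ?_)
    exact ((myHasSum hℓ).tsum_eq).symm
  rw [heq, ← MeasureTheory.integral_tsum_of_summable_integral_norm
    (F := fun (n : ℕ) (t : ℝ) => t * Real.exp (-(((n:ℝ)+1)*t)))
    (fun n => myIntegrableOn ((n:ℝ)+1) (by positivity)) ?_]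
  · rw [← hs.tsum_eq]
    congr 1
    ext n
    rw [myIntegral ((n:ℝ)+1) (by positivity), one_div]
  · apply hs.summable.congr
    intro n
    rw [← myIntegral ((n:ℝ)+1) (by positivity)]
    refine setIntegral_congr_fun measurableSet_Ioi (fun t ht => ?_)
    exact (Real.norm_of_nonneg (mul_nonneg (le_of_lt ht) (Real.exp_pos _).le)).symm


/-- The Kontsevich volume `VΩ^K_{0,3} = 1`. -/
def VOmegaK03 (_ _ _ : ℝ) : ℝ := 1

/-- The Kontsevich volume `VΩ^K_{0,4}(ℓ₁,…,ℓ₄) = (1/2)(ℓ₁²+ℓ₂²+ℓ₃²+ℓ₄²)`. -/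
def VOmegaK04 (l1 l2 l3 l4 : ℝ) : ℝ := (1 / 2) * (l1 ^ 2 + l2 ^ 2 + l3 ^ 2 + l4 ^ 2)

/-- The Masur–Veech polynomial `VΩ^{MV}_{0,4}`: the sum over the stable graphs of type
`(0,4)` — the one-vertex graph, contributing `VΩ^K_{0,4}(L)`, and the three one-edge
graphs with two trivalent genus-zero vertices (leaves split `2+2`), each contributing
`∫₀^∞ VΩ^K_{0,3}(ℓ,L_a,L_b)·VΩ^K_{0,3}(ℓ,L_c,L_d)·ℓ dℓ/(e^ℓ−1)` (trivial automorphisms). -/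
def VOmegaMV04 (L : Fin 4 → ℝ) : ℝ :=
  VOmegaK04 (L 0) (L 1) (L 2) (L 3) +
    (∫ ℓ in Set.Ioi (0 : ℝ),
      VOmegaK03 ℓ (L 0) (L 1) * VOmegaK03 ℓ (L 2) (L 3) * (ℓ / (Real.exp ℓ - 1))) +
    (∫ ℓ in Set.Ioi (0 : ℝ),
      VOmegaK03 ℓ (L 0) (L 2) * VOmegaK03 ℓ (L 1) (L 3) * (ℓ / (Real.exp ℓ - 1))) +
    (∫ ℓ in Set.Ioi (0 : ℝ),
      VOmegaK03 ℓ (L 0) (L 3) * VOmegaK03 ℓ (L 1) (L 2) * (ℓ / (Real.exp ℓ - 1)))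

/-- `VΩ^{MV}_{0,4}(L₁,…,L₄) = (1/2)(π² + L₁² + L₂² + L₃² + L₄²)`; in particular
`MV_{0,4} = (2^{4·0−2+4}·(4·0−4+4)!/(6·0−7+2·4)!)·VΩ^{MV}_{0,4}(0,0,0,0) = 2π²`. -/
theorem VOmegaMV04_eq :
    (∀ L : Fin 4 → ℝ, VOmegaMV04 L = (1 / 2) * (π ^ 2 + ∑ i, (L i) ^ 2)) ∧
      (2 : ℝ) ^ (((4 : ℤ) * 0 - 2 + 4).toNat) *
          (Nat.factorial (((4 : ℤ) * 0 - 4 + 4).toNat) : ℝ) /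
          (Nat.factorial (((6 : ℤ) * 0 - 7 + 2 * 4).toNat) : ℝ) *
          VOmegaMV04 (fun _ => 0) = 2 * π ^ 2 := by
  have h1 : ∀ L : Fin 4 → ℝ, VOmegaMV04 L = (1 / 2) * (π ^ 2 + ∑ i, (L i) ^ 2) := by
    intro L
    unfold VOmegaMV04 VOmegaK04 VOmegaK03
    simp only [one_mul]
    rw [key_integral, Fin.sum_univ_four]
    ring
  refine ⟨h1, ?_⟩
  rw [h1]
  norm_num [Int.toNat]
  ring

end
end
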